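/- Let n ≥ 1 be an integer. Then there exists a constant C such that for all nonnegative functions A_1, A_2 on ℤ^n, Σ_{ν_1, ν_2 ∈ ℤ^n} (1 + |ν_1| + |ν_2|)^{−n} A_1(ν_1) A_2(ν_2) ≤ C ‖A_1‖_{ℓ²(ℤ^n)} ‖A_2‖_{ℓ²(ℤ^n)}. -/

import Mathlib

open MeasureTheory Complex Real SchwartzMap
open scoped ENNReal NNReal BigOperators RealInnerProductSpace

noncomputable section

/-- `ℝ^n` with the Euclidean norm. -/
abbrev Rn (n : ℕ) : Type := EuclideanSpace ℝ (Fin n)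

/-- Fourier transform with the convention `f̂(ξ) = ∫ e^{-i ξ·x} f(x) dx`. -/
def ft (n : ℕ) (f : Rn n → ℂ) (ξ : Rn n) : ℂ :=
  ∫ x : Rn n, Complex.exp (-Complex.I * ((⟪ξ, x⟫ : ℝ) : ℂ)) * f x

/-- Inverse Fourier transform `F⁻¹g(x) = (2π)^{-n} ∫ e^{i x·ξ} g(ξ) dξ`. -/
def invFt (n : ℕ) (g : Rn n → ℂ) (x : Rn n) : ℂ :=
  (((2 * π) ^ n : ℝ) : ℂ)⁻¹ * ∫ ξ : Rn n, Complex.exp (Complex.I * ((⟪x, ξ⟫ : ℝ) : ℂ)) * g ξ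

/-- The `N`-linear pseudo-differential operator `T_σ` with `x`-dependent symbol. -/
def pdo (n N : ℕ) (σ : Rn n × (Fin N → Rn n) → ℂ) (f : Fin N → 𝓢(Rn n, ℂ)) (x : Rn n) : ℂ :=
  (((2 * π) ^ (N * n) : ℝ) : ℂ)⁻¹ *
    ∫ ξ : Fin N → Rn n,
      Complex.exp (Complex.I * ((∑ j, ⟪x, ξ j⟫ : ℝ) : ℂ)) * σ (x, ξ) * ∏ j, ft n ⇑(f j) (ξ j)

/-- The `N`-linear Fourier multiplier operator `T_σ` (`x`-independent symbol). -/
def pdoX (n N : ℕ) (σ : (Fin N → Rn n) → ℂ) (f : Fin N → 𝓢(Rn n, ℂ)) (x : Rn n) : ℂ :=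
  (((2 * π) ^ (N * n) : ℝ) : ℂ)⁻¹ *
    ∫ ξ : Fin N → Rn n,
      Complex.exp (Complex.I * ((∑ j, ⟪x, ξ j⟫ : ℝ) : ℂ)) * σ ξ * ∏ j, ft n ⇑(f j) (ξ j)

/-- The multilinear Hörmander class `S^m_{0,0}(ℝ^n, N)`. -/
def SymbolClassS (n N : ℕ) (m : ℝ) (σ : Rn n × (Fin N → Rn n) → ℂ) : Prop :=
  ContDiff ℝ (⊤ : ℕ∞) σ ∧
    ∀ k : ℕ, ∃ C : ℝ, ∀ (x : Rn n) (ξ : Fin N → Rn n),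
      ‖iteratedFDeriv ℝ k σ (x, ξ)‖ ≤ C * (1 + ∑ j, ‖ξ j‖) ^ m

/-- The class `S^{m⃗}_{0,0}(ℝ^n, N)` with a vector of orders. -/
def SymbolClassV (n N : ℕ) (m : Fin N → ℝ) (σ : Rn n × (Fin N → Rn n) → ℂ) : Prop :=
  ContDiff ℝ (⊤ : ℕ∞) σ ∧
    ∀ k : ℕ, ∃ C : ℝ, ∀ (x : Rn n) (ξ : Fin N → Rn n),
      ‖iteratedFDeriv ℝ k σ (x, ξ)‖ ≤ C * ∏ j, (1 + ‖ξ j‖) ^ (m j)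

/-- The class `S^m_{0,0}(ℝ^n, N)^×` of `x`-independent symbols (multipliers). -/
def MultClassS (n N : ℕ) (m : ℝ) (σ : (Fin N → Rn n) → ℂ) : Prop :=
  ContDiff ℝ (⊤ : ℕ∞) σ ∧
    ∀ k : ℕ, ∃ C : ℝ, ∀ ξ : Fin N → Rn n,
      ‖iteratedFDeriv ℝ k σ ξ‖ ≤ C * (1 + ∑ j, ‖ξ j‖) ^ m

/-- Euclidean norm of a lattice point in `ℤ^n`. -/
def zn (n : ℕ) (ν : Fin n → ℤ) : ℝ := Real.sqrt (∑ i, ((ν i : ℝ)) ^ 2)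

/-- Embedding of `ℤ^n` into `ℝ^n`. -/
def zv (n : ℕ) (k : Fin n → ℤ) : Rn n := WithLp.toLp 2 (fun i => (k i : ℝ))


set_option maxHeartbeats 1000000
section Statement8Helpers
namespace St8

lemma sqrt_inv_le (k : ℕ) : (Real.sqrt (1 + k))⁻¹ ≤ 2 * (Real.sqrt (k+1) - Real.sqrt k) := by
  have h0 : (0:ℝ) ≤ k := Nat.cast_nonneg k
  have hs : Real.sqrt k ≤ Real.sqrt (k+1) := Real.sqrt_le_sqrt (by linarith)
  have hpos : 0 < Real.sqrt (k+1) := Real.sqrt_pos.2 (by linarith)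
  have hmul : (Real.sqrt (k+1) - Real.sqrt k) * (Real.sqrt (k+1) + Real.sqrt k) = 1 := by
    have h1 : Real.sqrt (k+1) ^ 2 = (k:ℝ)+1 := Real.sq_sqrt (by linarith)
    have h2 : Real.sqrt k ^ 2 = (k:ℝ) := Real.sq_sqrt h0
    nlinarith
  have hc : (1:ℝ) + k = (k:ℝ) + 1 := by ring
  rw [hc]
  have hinv : (Real.sqrt (k+1))⁻¹ * Real.sqrt (k+1) = 1 := inv_mul_cancel₀ hpos.ne'
  nlinarith [inv_nonneg.2 hpos.le]

/-- E1: partial sums of (1+k)^{-1/2}. -/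
lemma sum_sqrt_inv_le (m : ℕ) :
    ∑ k ∈ Finset.range (m+1), (Real.sqrt (1 + k))⁻¹ ≤ 2 * Real.sqrt (1 + m) := by
  have h := Finset.sum_range_sub (fun i : ℕ => Real.sqrt i) (m+1)
  calc ∑ k ∈ Finset.range (m+1), (Real.sqrt (1 + k))⁻¹
      ≤ ∑ k ∈ Finset.range (m+1), 2 * (Real.sqrt (k+1) - Real.sqrt k) :=
        Finset.sum_le_sum fun k _ => sqrt_inv_le k
    _ = 2 * ∑ k ∈ Finset.range (m+1), (Real.sqrt (k+1) - Real.sqrt k) := by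
        rw [Finset.mul_sum]
    _ ≤ 2 * Real.sqrt (1 + m) := by
        have : ∑ k ∈ Finset.range (m+1), (Real.sqrt (k+1) - Real.sqrt k)
            = Real.sqrt (m+1) - Real.sqrt 0 := by
          simpa using h
        rw [this, Real.sqrt_zero, add_comm (1:ℝ) (m:ℝ)]
        simp

/-- step for E2, t ≥ 1 -/
lemma e2_step (t : ℕ) (ht : 1 ≤ t) :
    ((1:ℝ) + t)⁻¹ * (Real.sqrt (1 + t))⁻¹ ≤ 2 * ((Real.sqrt t)⁻¹ - (Real.sqrt (t+1))⁻¹) := by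
  have h0 : (1:ℝ) ≤ t := by exact_mod_cast ht
  set a := Real.sqrt t with ha
  set b := Real.sqrt (t+1) with hb
  have hapos : 0 < a := Real.sqrt_pos.2 (by linarith)
  have hbpos : 0 < b := Real.sqrt_pos.2 (by linarith)
  have hab : a ≤ b := Real.sqrt_le_sqrt (by linarith)
  have ha2 : a ^ 2 = (t:ℝ) := Real.sq_sqrt (by linarith)
  have hb2 : b ^ 2 = (t:ℝ) + 1 := Real.sq_sqrt (by linarith)
  have hc : (1:ℝ) + t = (t:ℝ) + 1 := by ring
  rw [hc]
  have h1 : ((t:ℝ)+1)⁻¹ * b⁻¹ = (b^3)⁻¹ := by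
    rw [← hb2, ← mul_inv]; ring_nf
  have h2 : (a⁻¹ - b⁻¹) = (b - a) / (a * b) := by field_simp
  rw [h1, h2]
  have hd : (b - a) * (b + a) = 1 := by nlinarith
  have h3 : 2 * ((b - a) / (a * b)) = (2 * (b-a)) / (a * b) := by ring
  rw [h3, inv_eq_one_div, div_le_div_iff₀ (by positivity) (by positivity)]
  nlinarith [mul_pos hapos hbpos, sq_nonneg (b-a),
    mul_le_mul_of_nonneg_right hab (mul_nonneg hapos.le hbpos.le)]

/-- E2: tail partial sums. -/
lemma sum_tail_le (m N : ℕ) :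
    ∑ j ∈ Finset.range N, ((1:ℝ) + (j + (m+1) : ℕ))⁻¹ * (Real.sqrt (1 + (j + (m+1) : ℕ)))⁻¹
      ≤ 2 * (Real.sqrt (1 + m))⁻¹ := by
  have h := Finset.sum_range_sub' (fun j : ℕ => (Real.sqrt (j + (m+1) : ℕ))⁻¹) N
  calc ∑ j ∈ Finset.range N, ((1:ℝ) + (j + (m+1) : ℕ))⁻¹ * (Real.sqrt (1 + (j + (m+1) : ℕ)))⁻¹
      ≤ ∑ j ∈ Finset.range N,
          2 * ((Real.sqrt (j + (m+1) : ℕ))⁻¹ - (Real.sqrt ((j + (m+1) : ℕ) + 1))⁻¹) := by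
        refine Finset.sum_le_sum fun j _ => ?_
        have := e2_step (j + (m+1)) (by omega)
        convert this using 3 <;> push_cast <;> ring
    _ = 2 * ∑ j ∈ Finset.range N,
          ((Real.sqrt (j + (m+1) : ℕ))⁻¹ - (Real.sqrt ((j + (m+1) : ℕ) + 1))⁻¹) := by
        rw [Finset.mul_sum]
    _ ≤ 2 * (Real.sqrt (1 + m))⁻¹ := by
        have he : ∀ j : ℕ, ((Real.sqrt ((j+1) + (m+1) : ℕ))⁻¹ : ℝ)
            = (Real.sqrt ((j + (m+1) : ℕ) + 1))⁻¹ := by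
          intro j; congr 2; push_cast; ring
        have h2 : ∑ j ∈ Finset.range N,
            ((Real.sqrt (j + (m+1) : ℕ))⁻¹ - (Real.sqrt ((j + (m+1) : ℕ) + 1))⁻¹)
            = (Real.sqrt ((0 + (m+1) : ℕ)))⁻¹ - (Real.sqrt (N + (m+1) : ℕ))⁻¹ := by
          rw [← h]; refine Finset.sum_congr rfl fun j _ => ?_; rw [he j]
        rw [h2]
        have : ((1:ℝ) + m) = ((0 + (m+1) : ℕ) : ℝ) := by push_cast; ring
        rw [this]
        have : (0:ℝ) ≤ (Real.sqrt (N + (m+1) : ℕ))⁻¹ := by positivity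
        linarith

end St8

namespace St8b
open St8

noncomputable def W (k : ℕ) : ℝ≥0∞ := ENNReal.ofReal ((Real.sqrt (1 + k))⁻¹)
noncomputable def κn (m k : ℕ) : ℝ≥0∞ := ENNReal.ofReal (((1:ℝ) + m + k)⁻¹)

lemma W_pos (k : ℕ) : 0 < W k := by
  rw [W, ENNReal.ofReal_pos]
  positivity

lemma W_ne_top (k : ℕ) : W k ≠ ∞ := ENNReal.ofReal_ne_top

lemma W_anti {j k : ℕ} (h : j ≤ k) : W k ≤ W j := by
  rw [W, W]
  apply ENNReal.ofReal_le_ofReal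
  have : Real.sqrt (1 + j) ≤ Real.sqrt (1 + k) := by
    apply Real.sqrt_le_sqrt; push_cast; linarith [(by exact_mod_cast h : (j:ℝ) ≤ k)]
  apply inv_anti₀ (by positivity) this

lemma nat_bound (m : ℕ) : ∑' k : ℕ, κn m k * W k ≤ 4 * W m := by
  rw [← Summable.sum_add_tsum_nat_add' (f := fun k => κn m k * W k) (k := m+1) ENNReal.summable]
  have part1 : ∑ k ∈ Finset.range (m+1), κn m k * W k ≤ 2 * W m := by
    calc ∑ k ∈ Finset.range (m+1), κn m k * W k
        ≤ ∑ k ∈ Finset.range (m+1), ENNReal.ofReal (((1:ℝ)+m)⁻¹) * W k := by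
          refine Finset.sum_le_sum fun k _ => ?_
          refine mul_le_mul_left (ENNReal.ofReal_le_ofReal ?_) _
          apply inv_anti₀ (by positivity)
          have : (0:ℝ) ≤ k := Nat.cast_nonneg k
          linarith
      _ = ENNReal.ofReal (((1:ℝ)+m)⁻¹) * ENNReal.ofReal
            (∑ k ∈ Finset.range (m+1), (Real.sqrt (1 + k))⁻¹) := by
          simp only [← Finset.mul_sum, W]
          congr 1
          rw [ENNReal.ofReal_sum_of_nonneg]
          intro k _; positivity
      _ ≤ ENNReal.ofReal (((1:ℝ)+m)⁻¹) * ENNReal.ofReal (2 * Real.sqrt (1 + m)) := by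
          exact mul_le_mul_right (ENNReal.ofReal_le_ofReal (sum_sqrt_inv_le m)) _
      _ = 2 * W m := by
          rw [← ENNReal.ofReal_mul (by positivity), W]
          have hsq : Real.sqrt (1+m) ^ 2 = 1 + (m:ℝ) := Real.sq_sqrt (by positivity)
          have hpos : (0:ℝ) < Real.sqrt (1+m) := Real.sqrt_pos.2 (by positivity)
          have : ((1:ℝ)+m)⁻¹ * (2 * Real.sqrt (1+m)) = 2 * (Real.sqrt (1+m))⁻¹ := by
            field_simp
            nlinarith [hsq]
          rw [this, ENNReal.ofReal_mul (by norm_num)]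
          norm_num
  have part2 : ∑' k : ℕ, κn m (k + (m+1)) * W (k + (m+1)) ≤ 2 * W m := by
    have hb : ∀ k : ℕ, κn m (k + (m+1)) * W (k + (m+1))
        ≤ ENNReal.ofReal (((1:ℝ) + (k + (m+1) : ℕ))⁻¹ * (Real.sqrt (1 + (k + (m+1) : ℕ)))⁻¹) := by
      intro k
      rw [κn, W, ← ENNReal.ofReal_mul (by positivity)]
      apply ENNReal.ofReal_le_ofReal
      apply mul_le_mul_of_nonneg_right _ (by positivity)
      apply inv_anti₀ (by positivity)
      push_cast
      have : (0:ℝ) ≤ m := Nat.cast_nonneg m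
      linarith
    refine le_trans (ENNReal.tsum_le_tsum hb) ?_
    have hb2 : (2 : ℝ≥0∞) * W m = ENNReal.ofReal (2 * (Real.sqrt (1 + m))⁻¹) := by
      rw [W, ENNReal.ofReal_mul (by norm_num)]; norm_num
    rw [hb2]
    refine Summable.tsum_le_of_sum_le ENNReal.summable fun u => ?_
    obtain ⟨N, hN⟩ := u.exists_nat_subset_range
    calc ∑ j ∈ u, ENNReal.ofReal (((1:ℝ) + (j + (m+1) : ℕ))⁻¹ * (Real.sqrt (1 + (j + (m+1) : ℕ)))⁻¹)
        ≤ ∑ j ∈ Finset.range N, ENNReal.ofReal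
            (((1:ℝ) + (j + (m+1) : ℕ))⁻¹ * (Real.sqrt (1 + (j + (m+1) : ℕ)))⁻¹) :=
          Finset.sum_le_sum_of_subset hN
      _ = ENNReal.ofReal (∑ j ∈ Finset.range N,
            ((1:ℝ) + (j + (m+1) : ℕ))⁻¹ * (Real.sqrt (1 + (j + (m+1) : ℕ)))⁻¹) := by
          rw [ENNReal.ofReal_sum_of_nonneg]; intro k _; positivity
      _ ≤ ENNReal.ofReal (2 * (Real.sqrt (1 + m))⁻¹) :=
          ENNReal.ofReal_le_ofReal (sum_tail_le m N)
  calc ∑ k ∈ Finset.range (m+1), κn m k * W k + ∑' k : ℕ, κn m (k + (m+1)) * W (k + (m+1))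
      ≤ 2 * W m + 2 * W m := add_le_add part1 part2
    _ = 4 * W m := by ring

end St8b

namespace St8c
open St8 St8b

noncomputable def w (b : ℤ) : ℝ≥0∞ := W b.natAbs
noncomputable def κ (a b : ℤ) : ℝ≥0∞ := ENNReal.ofReal (((1:ℝ) + a.natAbs + b.natAbs)⁻¹)

lemma w_pos (b : ℤ) : 0 < w b := W_pos _
lemma w_ne_top (b : ℤ) : w b ≠ ∞ := W_ne_top _

lemma int_bound (a : ℤ) : ∑' b : ℤ, κ a b * w b ≤ 8 * w a := by
  set m := a.natAbs with hm
  have h := tsum_of_nat_of_neg_add_one (f := fun b : ℤ => κ a b * w b)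
    ENNReal.summable ENNReal.summable
  rw [h]
  have h1 : ∀ k : ℕ, κ a (k:ℤ) * w (k:ℤ) = κn m k * W k := by
    intro k; simp [κ, w, κn, W, hm]
  have h2 : ∀ k : ℕ, κ a (-((k:ℤ)+1)) * w (-((k:ℤ)+1)) = κn m (k+1) * W (k+1) := by
    intro k
    have hab : (-((k:ℤ)+1)).natAbs = k+1 := by
      rw [Int.natAbs_neg]; exact_mod_cast Int.natAbs_natCast (k+1)
    simp only [κ, w, κn, W, hab, hm]
  have step : ∀ k : ℕ, κn m (k+1) * W (k+1) ≤ κn m k * W k := by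
    intro k
    refine mul_le_mul' (ENNReal.ofReal_le_ofReal ?_) (W_anti (by omega))
    apply inv_anti₀ (by positivity)
    push_cast; linarith
  calc (∑' k : ℕ, κ a (k:ℤ) * w (k:ℤ)) + ∑' k : ℕ, κ a (-((k:ℤ)+1)) * w (-((k:ℤ)+1))
      = (∑' k : ℕ, κn m k * W k) + ∑' k : ℕ, κn m (k+1) * W (k+1) := by
        rw [tsum_congr h1, tsum_congr h2]
    _ ≤ (∑' k : ℕ, κn m k * W k) + ∑' k : ℕ, κn m k * W k :=
        add_le_add_right (ENNReal.tsum_le_tsum step) _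
    _ ≤ 4 * W m + 4 * W m := add_le_add (nat_bound m) (nat_bound m)
    _ = 8 * w a := by rw [w, ← hm]; ring

lemma tsum_pi_prod : ∀ (n : ℕ) (g : Fin n → ℤ → ℝ≥0∞),
    ∑' ν : Fin n → ℤ, ∏ i, g i (ν i) = ∏ i, ∑' b, g i b := by
  intro n
  induction n with
  | zero =>
    intro g
    simp only [Finset.univ_eq_empty, Finset.prod_empty]
    exact tsum_eq_single (default : Fin 0 → ℤ)
      (fun b hb => absurd (Subsingleton.elim b default) hb)
  | succ n ih =>
    intro g
    have he := Equiv.tsum_eq ((Fin.consEquiv (fun _ : Fin (n+1) => ℤ)))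
      (fun ν : Fin (n+1) → ℤ => ∏ i, g i (ν i))
    rw [← he]
    have hval : ∀ p : ℤ × (Fin n → ℤ),
        (∏ i, g i ((Fin.consEquiv (fun _ : Fin (n+1) => ℤ)) p i))
          = g 0 p.1 * ∏ i : Fin n, g i.succ (p.2 i) := by
      intro p
      rw [Fin.prod_univ_succ]
      simp [Fin.consEquiv]
    calc ∑' p : ℤ × (Fin n → ℤ), ∏ i, g i ((Fin.consEquiv (fun _ : Fin (n+1) => ℤ)) p i)
        = ∑' x : ℤ, ∑' y : Fin n → ℤ, g 0 x * ∏ i : Fin n, g i.succ (y i) := by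
          rw [ENNReal.tsum_prod']
          exact tsum_congr fun x => tsum_congr fun y => hval (x, y)
      _ = ∑' x : ℤ, g 0 x * ∑' y : Fin n → ℤ, ∏ i : Fin n, g i.succ (y i) := by
          exact tsum_congr fun x => ENNReal.tsum_mul_left
      _ = (∑' x : ℤ, g 0 x) * ∏ i : Fin n, ∑' b, g i.succ b := by
          rw [ENNReal.tsum_mul_right, ih]
      _ = ∏ i, ∑' b, g i b := by rw [Fin.prod_univ_succ]

lemma cs {α : Type*} [Countable α] [MeasurableSpace α] [MeasurableSingletonClass α]
    (f g : α → ℝ≥0∞) :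
    ∑' a, f a * g a ≤ (∑' a, f a ^ (2:ℝ)) ^ (1/2:ℝ) * (∑' a, g a ^ (2:ℝ)) ^ (1/2:ℝ) := by
  have hpq : (2:ℝ).HolderConjugate 2 := Real.HolderConjugate.two_two
  have h := ENNReal.lintegral_mul_le_Lp_mul_Lq (MeasureTheory.Measure.count : MeasureTheory.Measure α)
    hpq (measurable_of_countable f).aemeasurable (measurable_of_countable g).aemeasurable
  simpa [MeasureTheory.lintegral_count] using h

end St8c

namespace St8d
open St8 St8b St8c

def zn' (n : ℕ) (ν : Fin n → ℤ) : ℝ := Real.sqrt (∑ i, ((ν i : ℝ)) ^ 2)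

noncomputable def hh (n : ℕ) (ν : Fin n → ℤ) : ℝ≥0∞ := ∏ i, w (ν i)
noncomputable def Kp (n : ℕ) (ν1 ν2 : Fin n → ℤ) : ℝ≥0∞ := ∏ i, κ (ν1 i) (ν2 i)

lemma hh_pos (n : ℕ) (ν : Fin n → ℤ) : 0 < hh n ν :=
  pos_iff_ne_zero.2 (Finset.prod_ne_zero_iff.2 fun i _ => (w_pos (ν i)).ne')

lemma hh_ne_top (n : ℕ) (ν : Fin n → ℤ) : hh n ν ≠ ∞ :=
  (ENNReal.prod_lt_top fun i _ => (w_ne_top (ν i)).lt_top).ne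

lemma zn'_nonneg (n : ℕ) (ν : Fin n → ℤ) : 0 ≤ zn' n ν := Real.sqrt_nonneg _

lemma abs_le_zn' (n : ℕ) (ν : Fin n → ℤ) (i : Fin n) : ((ν i).natAbs : ℝ) ≤ zn' n ν := by
  have h1 : ((ν i).natAbs : ℝ) = |((ν i : ℝ))| := by
    simp [Nat.cast_natAbs]
  rw [h1, ← Real.sqrt_sq_eq_abs]
  apply Real.sqrt_le_sqrt
  exact Finset.single_le_sum (f := fun j => ((ν j : ℝ))^2) (fun j _ => sq_nonneg _)
    (Finset.mem_univ i)

lemma kernel_bound (n : ℕ) (ν1 ν2 : Fin n → ℤ) :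
    ENNReal.ofReal ((1 + zn' n ν1 + zn' n ν2) ^ (-(n : ℝ))) ≤ Kp n ν1 ν2 := by
  set z1 := zn' n ν1
  set z2 := zn' n ν2
  have hz1 : 0 ≤ z1 := zn'_nonneg n ν1
  have hz2 : 0 ≤ z2 := zn'_nonneg n ν2
  have hbase : (0:ℝ) < 1 + z1 + z2 := by linarith
  have hprod : ∏ i, ((1:ℝ) + ((ν1 i).natAbs : ℝ) + ((ν2 i).natAbs : ℝ))
      ≤ (1 + z1 + z2) ^ n := by
    calc ∏ i, ((1:ℝ) + ((ν1 i).natAbs : ℝ) + ((ν2 i).natAbs : ℝ))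
        ≤ ∏ _i : Fin n, (1 + z1 + z2) := by
          refine Finset.prod_le_prod (fun i _ => by positivity) (fun i _ => ?_)
          have := abs_le_zn' n ν1 i
          have := abs_le_zn' n ν2 i
          linarith
      _ = (1 + z1 + z2) ^ n := by
          rw [Finset.prod_const, Finset.card_univ, Fintype.card_fin]
  have hrw : (1 + z1 + z2) ^ (-(n : ℝ)) = (((1 + z1 + z2) ^ n))⁻¹ := by
    rw [Real.rpow_neg hbase.le, Real.rpow_natCast]
  rw [hrw]
  have hproq : (0:ℝ) < ∏ i, ((1:ℝ) + ((ν1 i).natAbs : ℝ) + ((ν2 i).natAbs : ℝ)) :=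
    Finset.prod_pos fun i _ => by positivity
  calc ENNReal.ofReal (((1 + z1 + z2) ^ n)⁻¹)
      ≤ ENNReal.ofReal ((∏ i, ((1:ℝ) + ((ν1 i).natAbs : ℝ) + ((ν2 i).natAbs : ℝ)))⁻¹) :=
        ENNReal.ofReal_le_ofReal (by apply inv_anti₀ hproq hprod)
    _ = ENNReal.ofReal (∏ i, ((1:ℝ) + ((ν1 i).natAbs : ℝ) + ((ν2 i).natAbs : ℝ))⁻¹) := by
        rw [← Finset.prod_inv_distrib]
    _ = ∏ i, ENNReal.ofReal (((1:ℝ) + ((ν1 i).natAbs : ℝ) + ((ν2 i).natAbs : ℝ))⁻¹) := by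
        rw [ENNReal.ofReal_prod_of_nonneg]
        intro i _; positivity
    _ = Kp n ν1 ν2 := by rfl

lemma schur (n : ℕ) (ν1 : Fin n → ℤ) :
    ∑' ν2 : Fin n → ℤ, Kp n ν1 ν2 * hh n ν2 ≤ 8 ^ n * hh n ν1 := by
  calc ∑' ν2 : Fin n → ℤ, Kp n ν1 ν2 * hh n ν2
      = ∑' ν2 : Fin n → ℤ, ∏ i, (κ (ν1 i) (ν2 i) * w (ν2 i)) := by
        refine tsum_congr fun ν2 => ?_
        rw [Kp, hh, Finset.prod_mul_distrib]
    _ = ∏ i, ∑' b : ℤ, κ (ν1 i) b * w b := tsum_pi_prod n (fun i b => κ (ν1 i) b * w b)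
    _ ≤ ∏ i, (8 * w (ν1 i)) := Finset.prod_le_prod' fun i _ => int_bound (ν1 i)
    _ = 8 ^ n * hh n ν1 := by
        rw [Finset.prod_mul_distrib, Finset.prod_const, Finset.card_univ, Fintype.card_fin, hh]

end St8d

namespace St8e
open St8 St8b St8c St8d

theorem main (n : ℕ) :
    ∃ C : ℝ≥0, ∀ A1 A2 : (Fin n → ℤ) → ℝ, (∀ ν, 0 ≤ A1 ν) → (∀ ν, 0 ≤ A2 ν) →
      (∑' ν : (Fin n → ℤ) × (Fin n → ℤ),
          ENNReal.ofReal ((1 + zn n ν.1 + zn n ν.2) ^ (-(n : ℝ))) *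
            (ENNReal.ofReal (A1 ν.1) * ENNReal.ofReal (A2 ν.2)))
        ≤ C * ((∑' μ : Fin n → ℤ, ENNReal.ofReal (A1 μ) ^ 2) ^ (1 / 2 : ℝ) *
            (∑' μ : Fin n → ℤ, ENNReal.ofReal (A2 μ) ^ 2) ^ (1 / 2 : ℝ)) := by
  have hzz : zn = zn' := rfl
  simp only [hzz]
  refine ⟨8^n, fun A1 A2 _ _ => ?_⟩
  set a1 : (Fin n → ℤ) → ℝ≥0∞ := fun ν => ENNReal.ofReal (A1 ν) with ha1
  set a2 : (Fin n → ℤ) → ℝ≥0∞ := fun ν => ENNReal.ofReal (A2 ν) with ha2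
  set F : (Fin n → ℤ) × (Fin n → ℤ) → ℝ≥0∞ :=
    fun p => (Kp n p.1 p.2 * hh n p.2 * (hh n p.1)⁻¹) ^ (1/2:ℝ) * a1 p.1 with hF
  set G : (Fin n → ℤ) × (Fin n → ℤ) → ℝ≥0∞ :=
    fun p => (Kp n p.1 p.2 * hh n p.1 * (hh n p.2)⁻¹) ^ (1/2:ℝ) * a2 p.2 with hG
  have hcancel : ∀ ν : Fin n → ℤ, hh n ν * (hh n ν)⁻¹ = 1 :=
    fun ν => ENNReal.mul_inv_cancel (hh_pos n ν).ne' (hh_ne_top n ν)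
  have hFG : ∀ p : (Fin n → ℤ) × (Fin n → ℤ),
      Kp n p.1 p.2 * (a1 p.1 * a2 p.2) = F p * G p := by
    intro p
    set k := Kp n p.1 p.2
    set h1 := hh n p.1
    set h2 := hh n p.2
    have e1 : F p * G p
        = ((k * h2 * h1⁻¹) ^ (1/2:ℝ) * (k * h1 * h2⁻¹) ^ (1/2:ℝ)) * (a1 p.1 * a2 p.2) := by
      rw [hF, hG]; ring
    have e2 : (k * h2 * h1⁻¹) ^ (1/2:ℝ) * (k * h1 * h2⁻¹) ^ (1/2:ℝ)
        = ((k * h2 * h1⁻¹) * (k * h1 * h2⁻¹)) ^ (1/2:ℝ) :=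
      (ENNReal.mul_rpow_of_nonneg _ _ (by norm_num)).symm
    have e3 : (k * h2 * h1⁻¹) * (k * h1 * h2⁻¹) = (k * k) * ((h1 * h1⁻¹) * (h2 * h2⁻¹)) := by
      ring
    have e4 : ((k * k) : ℝ≥0∞) ^ (1/2:ℝ) = k := by
      rw [ENNReal.mul_rpow_of_nonneg _ _ (by norm_num : (0:ℝ) ≤ 1/2),
        ← ENNReal.rpow_add_of_nonneg _ _ (by norm_num) (by norm_num)]
      norm_num
    rw [e1, e2, e3, hcancel, hcancel, mul_one, mul_one, e4]
  have hsq : ∀ (k h1i h2i : ℝ≥0∞) (a : ℝ≥0∞),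
      ((k * h2i * h1i⁻¹) ^ (1/2:ℝ) * a) ^ (2:ℝ) = (k * h2i * h1i⁻¹) * a ^ (2:ℝ) := by
    intro k h1i h2i a
    rw [ENNReal.mul_rpow_of_nonneg _ _ (by norm_num : (0:ℝ) ≤ 2), ← ENNReal.rpow_mul]
    norm_num
  have hsum1 : ∑' p : (Fin n → ℤ) × (Fin n → ℤ), F p ^ (2:ℝ)
      ≤ 8^n * ∑' μ : Fin n → ℤ, a1 μ ^ (2:ℝ) := by
    calc ∑' p : (Fin n → ℤ) × (Fin n → ℤ), F p ^ (2:ℝ)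
        = ∑' ν1 : Fin n → ℤ, ∑' ν2 : Fin n → ℤ,
            ((hh n ν1)⁻¹ * a1 ν1 ^ (2:ℝ)) * (Kp n ν1 ν2 * hh n ν2) := by
          rw [ENNReal.tsum_prod']
          refine tsum_congr fun ν1 => tsum_congr fun ν2 => ?_
          rw [hF, hsq]; ring
      _ = ∑' ν1 : Fin n → ℤ,
            ((hh n ν1)⁻¹ * a1 ν1 ^ (2:ℝ)) * ∑' ν2, (Kp n ν1 ν2 * hh n ν2) := by
          exact tsum_congr fun ν1 => ENNReal.tsum_mul_left
      _ ≤ ∑' ν1 : Fin n → ℤ, ((hh n ν1)⁻¹ * a1 ν1 ^ (2:ℝ)) * (8^n * hh n ν1) := by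
          exact ENNReal.tsum_le_tsum fun ν1 => mul_le_mul_right (schur n ν1) _
      _ = ∑' ν1 : Fin n → ℤ, 8^n * (a1 ν1 ^ (2:ℝ) * (hh n ν1 * (hh n ν1)⁻¹)) := by
          exact tsum_congr fun ν1 => by ring
      _ = 8^n * ∑' μ : Fin n → ℤ, a1 μ ^ (2:ℝ) := by
          rw [← ENNReal.tsum_mul_left]
          exact tsum_congr fun ν1 => by rw [hcancel, mul_one]
  have hsum2 : ∑' p : (Fin n → ℤ) × (Fin n → ℤ), G p ^ (2:ℝ)
      ≤ 8^n * ∑' μ : Fin n → ℤ, a2 μ ^ (2:ℝ) := by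
    calc ∑' p : (Fin n → ℤ) × (Fin n → ℤ), G p ^ (2:ℝ)
        = ∑' ν1 : Fin n → ℤ, ∑' ν2 : Fin n → ℤ,
            (hh n ν1 * ((hh n ν2)⁻¹ * a2 ν2 ^ (2:ℝ))) * Kp n ν1 ν2 := by
          rw [ENNReal.tsum_prod']
          refine tsum_congr fun ν1 => tsum_congr fun ν2 => ?_
          rw [hG, hsq]; ring
      _ = ∑' ν2 : Fin n → ℤ, ∑' ν1 : Fin n → ℤ,
            ((hh n ν2)⁻¹ * a2 ν2 ^ (2:ℝ)) * (Kp n ν2 ν1 * hh n ν1) := by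
          rw [ENNReal.tsum_comm]
          refine tsum_congr fun ν2 => tsum_congr fun ν1 => ?_
          have hKsymm : Kp n ν1 ν2 = Kp n ν2 ν1 := by
            refine Finset.prod_congr rfl fun i _ => ?_
            rw [κ, κ]
            congr 2
            push_cast; ring
          rw [hKsymm]; ring
      _ ≤ 8^n * ∑' μ : Fin n → ℤ, a2 μ ^ (2:ℝ) := by
          calc ∑' ν2 : Fin n → ℤ, ∑' ν1 : Fin n → ℤ,
              ((hh n ν2)⁻¹ * a2 ν2 ^ (2:ℝ)) * (Kp n ν2 ν1 * hh n ν1)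
              = ∑' ν2 : Fin n → ℤ,
                  ((hh n ν2)⁻¹ * a2 ν2 ^ (2:ℝ)) * ∑' ν1, (Kp n ν2 ν1 * hh n ν1) :=
                tsum_congr fun ν2 => ENNReal.tsum_mul_left
            _ ≤ ∑' ν2 : Fin n → ℤ, ((hh n ν2)⁻¹ * a2 ν2 ^ (2:ℝ)) * (8^n * hh n ν2) :=
                ENNReal.tsum_le_tsum fun ν2 => mul_le_mul_right (schur n ν2) _
            _ = ∑' ν2 : Fin n → ℤ, 8^n * (a2 ν2 ^ (2:ℝ) * (hh n ν2 * (hh n ν2)⁻¹)) :=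
                tsum_congr fun ν2 => by ring
            _ = 8^n * ∑' μ : Fin n → ℤ, a2 μ ^ (2:ℝ) := by
                rw [← ENNReal.tsum_mul_left]
                exact tsum_congr fun ν2 => by rw [hcancel, mul_one]
  -- now chain
  have step1 : (∑' ν : (Fin n → ℤ) × (Fin n → ℤ),
      ENNReal.ofReal ((1 + zn' n ν.1 + zn' n ν.2) ^ (-(n : ℝ))) *
        (a1 ν.1 * a2 ν.2)) ≤ ∑' p : (Fin n → ℤ) × (Fin n → ℤ), F p * G p := by
    refine ENNReal.tsum_le_tsum fun p => ?_
    rw [← hFG p]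
    exact mul_le_mul_left (kernel_bound n p.1 p.2) _
  have step2 := cs F G
  have hmono : ∀ x y : ℝ≥0∞, x ≤ y → x ^ (1/2:ℝ) ≤ y ^ (1/2:ℝ) :=
    fun x y hxy => ENNReal.rpow_le_rpow hxy (by norm_num)
  have hsplit : ∀ S : ℝ≥0∞, ((8:ℝ≥0∞)^n * S) ^ (1/2:ℝ)
      = ((8:ℝ≥0∞)^n) ^ (1/2:ℝ) * S ^ (1/2:ℝ) :=
    fun S => ENNReal.mul_rpow_of_nonneg _ _ (by norm_num)
  have h88 : ((8:ℝ≥0∞)^n) ^ (1/2:ℝ) * ((8:ℝ≥0∞)^n) ^ (1/2:ℝ) = (8:ℝ≥0∞)^n := by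
    rw [← ENNReal.rpow_add_of_nonneg _ _ (by norm_num) (by norm_num)]
    norm_num
  have hrw2 : ∀ B : (Fin n → ℤ) → ℝ≥0∞, (∑' μ, B μ ^ (2:ℝ)) = ∑' μ, B μ ^ 2 :=
    fun B => tsum_congr fun μ => ENNReal.rpow_two _
  calc (∑' ν : (Fin n → ℤ) × (Fin n → ℤ),
      ENNReal.ofReal ((1 + zn' n ν.1 + zn' n ν.2) ^ (-(n : ℝ))) * (a1 ν.1 * a2 ν.2))
      ≤ ∑' p : (Fin n → ℤ) × (Fin n → ℤ), F p * G p := step1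
    _ ≤ (∑' p, F p ^ (2:ℝ)) ^ (1/2:ℝ) * (∑' p, G p ^ (2:ℝ)) ^ (1/2:ℝ) := step2
    _ ≤ (8^n * ∑' μ : Fin n → ℤ, a1 μ ^ (2:ℝ)) ^ (1/2:ℝ)
        * (8^n * ∑' μ : Fin n → ℤ, a2 μ ^ (2:ℝ)) ^ (1/2:ℝ) :=
        mul_le_mul' (hmono _ _ hsum1) (hmono _ _ hsum2)
    _ = (((8:ℝ≥0∞)^n) ^ (1/2:ℝ) * ((8:ℝ≥0∞)^n) ^ (1/2:ℝ)) *
        ((∑' μ : Fin n → ℤ, a1 μ ^ (2:ℝ)) ^ (1/2:ℝ)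
        * (∑' μ : Fin n → ℤ, a2 μ ^ (2:ℝ)) ^ (1/2:ℝ)) := by
        rw [hsplit, hsplit, mul_mul_mul_comm]
    _ = (8:ℝ≥0∞)^n * ((∑' μ : Fin n → ℤ, a1 μ ^ (2:ℝ)) ^ (1/2:ℝ)
        * (∑' μ : Fin n → ℤ, a2 μ ^ (2:ℝ)) ^ (1/2:ℝ)) := by
        rw [h88]
    _ = (((8:ℝ≥0)^n : ℝ≥0) : ℝ≥0∞) * ((∑' μ : Fin n → ℤ, a1 μ ^ 2) ^ (1/2:ℝ)
        * (∑' μ : Fin n → ℤ, a2 μ ^ 2) ^ (1/2:ℝ)) := by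
        rw [hrw2, hrw2]
        norm_cast

end St8e
end Statement8Helpers

/-- (Hilbert-type inequality; the case `N = 2` of Lemma 2.4.)
`Σ_{ν_1,ν_2} (1+|ν_1|+|ν_2|)^{−n} A_1(ν_1) A_2(ν_2) ≲ ‖A_1‖_{ℓ²(ℤ^n)} ‖A_2‖_{ℓ²(ℤ^n)}`. -/
theorem statement8 (n : ℕ) (hn : 1 ≤ n) :
    ∃ C : ℝ≥0, ∀ A1 A2 : (Fin n → ℤ) → ℝ, (∀ ν, 0 ≤ A1 ν) → (∀ ν, 0 ≤ A2 ν) →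
      (∑' ν : (Fin n → ℤ) × (Fin n → ℤ),
          ENNReal.ofReal ((1 + zn n ν.1 + zn n ν.2) ^ (-(n : ℝ))) *
            (ENNReal.ofReal (A1 ν.1) * ENNReal.ofReal (A2 ν.2)))
        ≤ C * ((∑' μ : Fin n → ℤ, ENNReal.ofReal (A1 μ) ^ 2) ^ (1 / 2 : ℝ) *
            (∑' μ : Fin n → ℤ, ENNReal.ofReal (A2 μ) ^ 2) ^ (1 / 2 : ℝ)) :=
  St8e.main n

end
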